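/- Let d = (d_1, ..., d_n) be a non-increasing sequence of positive integers with even sum at most 2n - 2, and let k ∈ [n]. There exists a forest F with vertex set {u_1, ..., u_n}, d_F(u_i) = d_i for all i, such that {u_1, ..., u_k} is a dominating set and {u_{k+1}, ..., u_n} is an independent set, if and only if Σ_{i=1}^k d_i ≥ Σ_{i=k+1}^n d_i. -/

import Mathlib

open Finset

/-- The degree of a vertex in a simple graph. -/
noncomputable def deg {V : Type*} (G : SimpleGraph V) (v : V) : ℕ := Nat.card {u // G.Adj v u}

/-- `D` is a dominating set of `G`. -/
def DomSet {V : Type*} (G : SimpleGraph V) (D : Set V) : Prop := ∀ v ∉ D, ∃ u ∈ D, G.Adj u v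

/-- `S` is an independent set of `G`. -/
def IndepSet {V : Type*} (G : SimpleGraph V) (S : Set V) : Prop :=
  ∀ u ∈ S, ∀ v ∈ S, ¬ G.Adj u v

/-- The domination number of `G`. -/
noncomputable def domNum {V : Type*} [Fintype V] (G : SimpleGraph V) : ℕ :=
  sInf {k | ∃ D : Finset V, D.card = k ∧ DomSet G ↑D}

/-- The independence number of `G`. -/
noncomputable def indepNum {V : Type*} [Fintype V] (G : SimpleGraph V) : ℕ :=
  sSup {k | ∃ S : Finset V, S.card = k ∧ IndepSet G ↑S}

/-- Sum of the first `k` entries `d_1 + ... + d_k` (0-indexed: indices `< k`). -/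
def psum {n : ℕ} (d : Fin n → ℕ) (k : ℕ) : ℕ := ∑ i : Fin n, if (i : ℕ) < k then d i else 0

/-- Sum of the remaining entries `d_{k+1} + ... + d_n` (0-indexed: indices `≥ k`). -/
def ssum {n : ℕ} (d : Fin n → ℕ) (k : ℕ) : ℕ := ∑ i : Fin n, if k ≤ (i : ℕ) then d i else 0

/-- Slater's bound `sl(d) = min{k ∈ [n] : d_1 + ... + d_k ≥ n - k}`. -/
noncomputable def slater (n : ℕ) (d : Fin n → ℕ) : ℕ := sInf {k | 1 ≤ k ∧ k ≤ n ∧ n - k ≤ psum d k}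

/-- The annihilation number `a(d) = n - min{k ∈ [n] : Σ_{i≤k} d_i ≥ Σ_{i>k} d_i}`. -/
noncomputable def annih (n : ℕ) (d : Fin n → ℕ) : ℕ := n - sInf {k | 1 ≤ k ∧ k ≤ n ∧ ssum d k ≤ psum d k}

/-- The number of entries of `d` equal to `j`. -/
def nCount {n : ℕ} (d : Fin n → ℕ) (j : ℕ) : ℕ := (Finset.univ.filter fun i => d i = j).card

/-- The number of entries of `d` that are at least `2`. -/
def nGe2 {n : ℕ} (d : Fin n → ℕ) : ℕ := (Finset.univ.filter fun i => 2 ≤ d i).card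

/-- `F` is a forest realization of the degree sequence `d`. -/
def IsForestReal {n : ℕ} (d : Fin n → ℕ) (F : SimpleGraph (Fin n)) : Prop :=
  F.IsAcyclic ∧ ∀ i, deg F i = d i

/-- The minimum domination number over all forest realizations of `d`. -/
noncomputable def gammaFmin {n : ℕ} (d : Fin n → ℕ) : ℕ :=
  sInf {m | ∃ F : SimpleGraph (Fin n), IsForestReal d F ∧ domNum F = m}

/-- The maximum independence number over all forest realizations of `d`. -/
noncomputable def alphaFmax {n : ℕ} (d : Fin n → ℕ) : ℕ :=
  sSup {m | ∃ F : SimpleGraph (Fin n), IsForestReal d F ∧ indepNum F = m}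

lemma deg_eq {V : Type*} [Fintype V] (G : SimpleGraph V) [DecidableRel G.Adj] (v : V) :
    deg G v = (univ.filter fun u => G.Adj v u).card := by
  rw [deg, Nat.card_eq_fintype_card, Fintype.card_subtype]


lemma deg_eq_ncard {V : Type*} (G : SimpleGraph V) (v : V) :
    deg G v = (G.neighborSet v).ncard := by
  rw [deg, ← Nat.card_coe_set_eq]; rfl

def addEdge {V : Type*} (F : SimpleGraph V) (l j : V) (hne : l ≠ j) : SimpleGraph V where
  Adj u v := F.Adj u v ∨ (u = l ∧ v = j) ∨ (u = j ∧ v = l)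
  symm := by
    refine ⟨fun u v h => ?_⟩
    rcases h with h | ⟨h1, h2⟩ | ⟨h1, h2⟩
    · exact Or.inl h.symm
    · exact Or.inr (Or.inr ⟨h2, h1⟩)
    · exact Or.inr (Or.inl ⟨h2, h1⟩)
  loopless := by
    refine ⟨fun u h => ?_⟩
    rcases h with h | ⟨h1, h2⟩ | ⟨h1, h2⟩
    · exact F.irrefl h
    · exact hne (h1 ▸ h2 ▸ rfl)
    · exact hne ((h2 ▸ h1 ▸ rfl) : l = j)

section AE
variable {V : Type*} [DecidableEq V] {F : SimpleGraph V} {l j : V} (hne : l ≠ j) (hiso : ∀ u, ¬ F.Adj l u)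
include hiso

lemma addEdge_adj_left (u : V) : (addEdge F l j hne).Adj l u ↔ u = j := by
  constructor
  · rintro (h | ⟨h1, h2⟩ | ⟨h1, h2⟩)
    · exact absurd h (hiso u)
    · exact h2
    · exact absurd h1 hne
  · rintro rfl; exact Or.inr (Or.inl ⟨rfl, rfl⟩)

lemma addEdge_acyclic (hac : F.IsAcyclic) : (addEdge F l j hne).IsAcyclic := by
  set G := addEdge F l j hne with hG
  intro v c hc
  by_cases hl : l ∈ c.support
  · -- rotate to start at l
    have hc' := hc.rotate hl
    set c' := c.rotate l hl with hc'def
    clear_value c'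
    cases c' with
    | nil => exact hc'.ne_nil rfl
    | @cons _ b _ h' p =>
      have hb : b = j := (addEdge_adj_left hne hiso b).mp h'
      subst b
      have hpath : p.IsPath := ((SimpleGraph.Walk.cons_isCycle_iff p h').mp hc').1
      -- consider p.reverse : G.Walk l j
      have hrev : p.reverse.IsPath := hpath.reverse
      have hlen : 3 ≤ p.length + 1 := by
        have := hc'.three_le_length
        simpa using this
      cases hq : p.reverse with
      | nil =>
        have : p.length = 0 := by
          have := congrArg SimpleGraph.Walk.length hq
          simpa using this
        omega
      | @cons _ b2 _ h2' q =>
        have hb2 : b2 = j := (addEdge_adj_left hne hiso b2).mp h2'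
        subst b2
        have hqpath : q.IsPath ∧ l ∉ q.support := by
          rw [hq] at hrev
          exact (SimpleGraph.Walk.cons_isPath_iff h2' q).mp hrev
        have hqnil : q = SimpleGraph.Walk.nil := (SimpleGraph.Walk.isPath_iff_eq_nil (p := q)).mp hqpath.1
        have : p.length = 1 := by
          have := congrArg SimpleGraph.Walk.length hq
          rw [hqnil] at this
          simpa using this
        omega
  · -- cycle avoids l: transfer to F
    have hedges : ∀ e ∈ c.edges, e ∈ F.edgeSet := by
      intro e he
      induction e with
      | h u w =>
        have hadj : G.Adj u w := c.adj_of_mem_edges he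
        rcases hadj with h | ⟨h1, h2⟩ | ⟨h1, h2⟩
        · exact h
        · subst h1; exact absurd (c.fst_mem_support_of_mem_edges he) hl
        · subst h2; exact absurd (c.snd_mem_support_of_mem_edges he) hl
    exact hac (c.transfer F hedges) (hc.transfer hedges)

lemma addEdge_deg_left : deg (addEdge F l j hne) l = 1 := by
  rw [deg_eq_ncard]
  have : (addEdge F l j hne).neighborSet l = {j} := by
    ext u
    simp only [SimpleGraph.mem_neighborSet, Set.mem_singleton_iff]
    exact addEdge_adj_left hne hiso u
  rw [this, Set.ncard_singleton]

lemma addEdge_deg_right [Fintype V] : deg (addEdge F l j hne) j = deg F j + 1 := by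
  rw [deg_eq_ncard, deg_eq_ncard]
  have hns : (addEdge F l j hne).neighborSet j = insert l (F.neighborSet j) := by
    ext u
    simp only [SimpleGraph.mem_neighborSet, Set.mem_insert_iff]
    constructor
    · rintro (h | ⟨h1, h2⟩ | ⟨h1, h2⟩)
      · exact Or.inr h
      · exact absurd h1 hne.symm
      · exact Or.inl h2
    · rintro (rfl | h)
      · exact Or.inr (Or.inr ⟨rfl, rfl⟩)
      · exact Or.inl h
  rw [hns, Set.ncard_insert_of_notMem, add_comm]
  · intro h
    exact hiso j ((SimpleGraph.mem_neighborSet F j l).mp h).symm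

lemma addEdge_deg_other (v : V) (hv1 : v ≠ l) (hv2 : v ≠ j) :
    deg (addEdge F l j hne) v = deg F v := by
  rw [deg_eq_ncard, deg_eq_ncard]
  congr 1
  ext u
  simp only [SimpleGraph.mem_neighborSet]
  constructor
  · rintro (h | ⟨h1, h2⟩ | ⟨h1, h2⟩)
    · exact h
    · exact absurd h1 hv1
    · exact absurd h1 hv2
  · exact fun h => Or.inl h

end AE

lemma deg_bot {V : Type*} (v : V) : deg (⊥ : SimpleGraph V) v = 0 := by
  rw [deg_eq_ncard]
  have h : (⊥ : SimpleGraph V).neighborSet v = ∅ := by ext u; simp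
  rw [h, Set.ncard_empty]

lemma base_case {n : ℕ} (d : Fin n → ℕ) (T : Finset (Fin n)) (h0 : ∑ i, d i = 0) :
    ∃ F : SimpleGraph (Fin n), F.IsAcyclic ∧ (∀ v, deg F v = d v) ∧
      ∀ u ∈ T, ∀ v ∈ T, ¬ F.Adj u v := by
  refine ⟨⊥, SimpleGraph.isAcyclic_bot, fun v => ?_, fun u _ v _ h => h⟩
  rw [deg_bot]
  exact ((Finset.sum_eq_zero_iff.mp h0) v (mem_univ v)).symm

lemma select {n : ℕ} (d : Fin n → ℕ) (T : Finset (Fin n)) (m : ℕ)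
    (hsum : ∑ i, d i = m) (hm2 : 2 ≤ m)
    (hP : m + 2 ≤ 2 * (univ.filter fun v => 1 ≤ d v).card)
    (hT : ∑ i ∈ T, d i ≤ ∑ i ∈ Tᶜ, d i) :
    ∃ l j : Fin n, l ≠ j ∧ d l = 1 ∧ 1 ≤ d j ∧ (l ∉ T ∨ j ∉ T) ∧
      ((l ∉ T ∧ j ∉ T) → ∀ v ∈ T, d v = 0) ∧ (d j = 1 → ∀ v, d v ≤ 1) := by
  have hone : ∃ v, d v = 1 := by
    by_contra hno
    push_neg at hno
    have h2 : ∀ v ∈ (univ.filter fun v => 1 ≤ d v), 2 ≤ d v := by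
      intro v hv
      have := (mem_filter.mp hv).2
      have := hno v
      omega
    have hb := Finset.card_nsmul_le_sum _ d 2 h2
    have hb2 : ∑ v ∈ (univ.filter fun v => 1 ≤ d v), d v ≤ m := by
      rw [← hsum]
      exact Finset.sum_le_sum_of_subset (Finset.filter_subset _ _)
    simp only [smul_eq_mul] at hb
    have hrfl : (filter (fun v => 1 ≤ d v) univ).sum d
        = ∑ v ∈ filter (fun v => 1 ≤ d v) univ, d v := rfl
    omega
  have hTsplit : ∑ i ∈ T, d i + ∑ i ∈ Tᶜ, d i = m := by
    rw [Finset.sum_add_sum_compl, hsum]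
  have hAact : ∃ v ∈ Tᶜ, 1 ≤ d v := by
    by_contra hno
    push_neg at hno
    have h0 : ∑ i ∈ Tᶜ, d i = 0 := Finset.sum_eq_zero (fun v hv => by have := hno v hv; omega)
    omega
  by_cases hA2 : ∃ x ∈ Tᶜ, 2 ≤ d x
  · obtain ⟨j, hjc, hj2⟩ := hA2
    have hjT : j ∉ T := mem_compl.mp hjc
    by_cases hT1 : ∃ x ∈ T, d x = 1
    · obtain ⟨l, hlT, hl1⟩ := hT1
      exact ⟨l, j, fun h => by rw [h] at hl1; omega, hl1, by omega, Or.inr hjT,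
        fun h => (h.1 hlT).elim, fun h => by omega⟩
    · obtain ⟨l, hl1⟩ := hone
      have hlT : l ∉ T := fun hmem => hT1 ⟨l, hmem, hl1⟩
      by_cases hT2 : ∃ x ∈ T, 2 ≤ d x
      · obtain ⟨i, hiT, hi2⟩ := hT2
        exact ⟨l, i, fun h => by rw [h] at hl1; omega, hl1, by omega, Or.inl hlT,
          fun h => (h.2 hiT).elim, fun h => by omega⟩
      · have hTzero : ∀ v ∈ T, d v = 0 := by
          intro v hv
          have h1 : d v ≠ 1 := fun h => hT1 ⟨v, hv, h⟩
          have h2 : ¬ 2 ≤ d v := fun h => hT2 ⟨v, hv, h⟩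
          omega
        exact ⟨l, j, fun h => by rw [h] at hl1; omega, hl1, by omega, Or.inl hlT,
          fun _ => hTzero, fun h => by omega⟩
  · push_neg at hA2
    obtain ⟨a, hac, ha1⟩ := hAact
    have ha1' : d a = 1 := by have := hA2 a hac; omega
    by_cases hT2 : ∃ x ∈ T, 2 ≤ d x
    · obtain ⟨j, hjT, hj2⟩ := hT2
      exact ⟨a, j, fun h => by rw [h] at ha1'; omega, ha1', by omega,
        Or.inl (mem_compl.mp hac), fun h => (h.2 hjT).elim, fun h => by omega⟩
    · have hall1 : ∀ v, d v ≤ 1 := by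
        intro v
        by_cases hv : v ∈ T
        · have : ¬ 2 ≤ d v := fun h => hT2 ⟨v, hv, h⟩
          omega
        · have := hA2 v (mem_compl.mpr hv)
          omega
      by_cases hT1 : ∃ x ∈ T, d x = 1
      · obtain ⟨l, hlT, hl1⟩ := hT1
        have hla : l ≠ a := fun h => (mem_compl.mp hac) (h ▸ hlT)
        exact ⟨l, a, hla, hl1, by omega, Or.inr (mem_compl.mp hac),
          fun h => (h.1 hlT).elim, fun _ => hall1⟩
      · have hTzero : ∀ v ∈ T, d v = 0 := by
          intro v hv
          have h1 : d v ≠ 1 := fun h => hT1 ⟨v, hv, h⟩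
          have := hall1 v
          omega
        have hcard : 2 ≤ (Tᶜ.filter fun v => 1 ≤ d v).card := by
          have h1 : ∑ i ∈ T, d i = 0 := Finset.sum_eq_zero hTzero
          have h3 : ∑ i ∈ Tᶜ, d i ≤ (Tᶜ.filter fun v => 1 ≤ d v).card := by
            have he : ∑ i ∈ Tᶜ.filter (fun v => 1 ≤ d v), d i = ∑ i ∈ Tᶜ, d i :=
              Finset.sum_filter_of_ne (fun x _ hx => by omega)
            have hle : ∑ i ∈ Tᶜ.filter (fun v => 1 ≤ d v), d i
                ≤ ∑ _i ∈ Tᶜ.filter (fun v => 1 ≤ d v), 1 :=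
              Finset.sum_le_sum (fun i _ => hall1 i)
            simpa [he] using hle
          omega
        obtain ⟨x, hx, y, hy, hxy⟩ := Finset.one_lt_card.mp hcard
        have hx' := mem_filter.mp hx
        have hy' := mem_filter.mp hy
        exact ⟨x, y, hxy, by have := hall1 x; have := hx'.2; omega, hy'.2,
          Or.inl (mem_compl.mp hx'.1), fun _ => hTzero, fun _ => hall1⟩

lemma key {n : ℕ} (m : ℕ) : ∀ (d : Fin n → ℕ) (T : Finset (Fin n)),
    ∑ i, d i = m → Even m →
    (m + 2 ≤ 2 * (univ.filter fun v => 1 ≤ d v).card ∨ m = 0) →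
    (∑ i ∈ T, d i ≤ ∑ i ∈ Tᶜ, d i) →
    ∃ F : SimpleGraph (Fin n), F.IsAcyclic ∧ (∀ v, deg F v = d v) ∧
      ∀ u ∈ T, ∀ v ∈ T, ¬ F.Adj u v := by
  induction m using Nat.strong_induction_on with
  | _ m IH =>
  intro d T hsum heven hcond hT
  rcases Nat.eq_zero_or_pos m with hm0 | hmpos
  · exact base_case d T (by rw [hsum, hm0])
  obtain ⟨r, hrm⟩ := id heven
  have hm2 : 2 ≤ m := by omega
  have hP : m + 2 ≤ 2 * (univ.filter fun v => 1 ≤ d v).card := by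
    rcases hcond with h | h
    · exact h
    · omega
  obtain ⟨l, j, hne, hdl, hdj, hside, hTz, hK2⟩ := select d T m hsum hm2 hP hT
  set d'' : Fin n → ℕ := fun v => if v = l then 0 else if v = j then d j - 1 else d v with hd''
  have hv_l : d'' l = 0 := by simp [hd'']
  have hv_j : d'' j = d j - 1 := by simp [hd'', Ne.symm hne]
  have hv_o : ∀ v, v ≠ l → v ≠ j → d'' v = d v := by
    intro v h1 h2; simp [hd'', h1, h2]
  have hdg : ∀ v, d v = d'' v + ((if v = l then 1 else 0) + (if v = j then 1 else 0)) := by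
    intro v
    rcases eq_or_ne v l with rfl | h1
    · rw [hv_l, if_pos rfl, if_neg hne, hdl]
    · rcases eq_or_ne v j with rfl | h2
      · rw [hv_j, if_neg h1, if_pos rfl]
        omega
      · rw [hv_o v h1 h2, if_neg h1, if_neg h2]
        omega
  have hsplit : ∀ s : Finset (Fin n), ∑ i ∈ s, d i
      = ∑ i ∈ s, d'' i + ((if l ∈ s then 1 else 0) + (if j ∈ s then 1 else 0)) := by
    intro s
    calc ∑ i ∈ s, d i
        = ∑ i ∈ s, (d'' i + ((if i = l then 1 else 0) + (if i = j then 1 else 0))) :=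
          Finset.sum_congr rfl (fun i _ => hdg i)
      _ = ∑ i ∈ s, d'' i + ((∑ i ∈ s, if i = l then 1 else 0)
            + ∑ i ∈ s, if i = j then 1 else 0) := by
          rw [Finset.sum_add_distrib, Finset.sum_add_distrib]
      _ = _ := by rw [Finset.sum_ite_eq' s l (fun _ => 1), Finset.sum_ite_eq' s j (fun _ => 1)]
  have hsum'' : ∑ i, d'' i = m - 2 := by
    have h := hsplit univ
    rw [if_pos (mem_univ l), if_pos (mem_univ j), hsum] at h
    omega
  have heven'' : Even (m - 2) := ⟨r - 1, by omega⟩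
  set P := univ.filter fun v => 1 ≤ d v with hPdef
  have hlP : l ∈ P := by simp [hPdef, hdl]
  have hjP : j ∈ P.erase l := by
    rw [mem_erase]
    exact ⟨fun h => hne h.symm, by simp [hPdef, hdj]⟩
  have hp1 : 1 ≤ P.card := Finset.card_pos.mpr ⟨l, hlP⟩
  have hcond'' : (m - 2) + 2 ≤ 2 * (univ.filter fun v => 1 ≤ d'' v).card ∨ (m - 2) = 0 := by
    by_cases hm4 : m = 2
    · right; omega
    left
    by_cases hdj2 : 2 ≤ d j
    · have hfe : (univ.filter fun v => 1 ≤ d'' v) = P.erase l := by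
        ext v
        simp only [mem_filter, mem_univ, true_and, mem_erase, hPdef]
        rcases eq_or_ne v l with rfl | h1
        · rw [hv_l]; simp
        · rcases eq_or_ne v j with rfl | h2
          · rw [hv_j]
            constructor
            · intro _; exact ⟨Ne.symm hne, hdj⟩
            · intro _; omega
          · rw [hv_o v h1 h2]; simp [h1]
      rw [hfe, Finset.card_erase_of_mem hlP]
      omega
    · have hdj1 : d j = 1 := by omega
      have hall1 := hK2 hdj1
      have hfe : (univ.filter fun v => 1 ≤ d'' v) = (P.erase l).erase j := by
        ext v
        simp only [mem_filter, mem_univ, true_and, mem_erase, hPdef]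
        rcases eq_or_ne v l with rfl | h1
        · rw [hv_l]; simp
        · rcases eq_or_ne v j with rfl | h2
          · rw [hv_j, hdj1]; simp
          · rw [hv_o v h1 h2]; simp [h1, h2]
      have hmp : m = P.card := by
        have h1 : ∑ i ∈ P, d i = ∑ i, d i :=
          Finset.sum_filter_of_ne (fun x _ hx => by omega)
        have h2 : ∑ i ∈ P, d i = P.card := by
          have : ∀ i ∈ P, d i = 1 := by
            intro i hi
            have := (mem_filter.mp hi).2
            have := hall1 i
            omega
          rw [Finset.sum_congr rfl this]
          simp
        omega
      rw [hfe, Finset.card_erase_of_mem hjP, Finset.card_erase_of_mem hlP]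
      omega
  have hT'' : ∑ i ∈ T, d'' i ≤ ∑ i ∈ Tᶜ, d'' i := by
    have h1 := hsplit T
    have h2 := hsplit Tᶜ
    by_cases hl : l ∈ T <;> by_cases hj : j ∈ T
    · rcases hside with h | h <;> contradiction
    · rw [if_pos hl, if_neg hj] at h1
      rw [if_neg (by simpa using hl : l ∉ Tᶜ), if_pos (mem_compl.mpr hj)] at h2
      omega
    · rw [if_neg hl, if_pos hj] at h1
      rw [if_pos (mem_compl.mpr hl), if_neg (by simpa using hj : j ∉ Tᶜ)] at h2
      omega
    · have h0 : ∑ i ∈ T, d i = 0 := Finset.sum_eq_zero (hTz ⟨hl, hj⟩)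
      rw [if_neg hl, if_neg hj] at h1
      omega
  obtain ⟨F', hac', hdeg', hind'⟩ := IH (m - 2) (by omega) d'' T hsum'' heven'' hcond'' hT''
  have hiso : ∀ u, ¬ F'.Adj l u := by
    intro u hadj
    have h0 : deg F' l = 0 := by
      rw [hdeg' l]; exact hv_l
    rw [deg_eq_ncard] at h0
    have hset : F'.neighborSet l = ∅ := (Set.ncard_eq_zero (Set.toFinite _)).mp h0
    have hmem : u ∈ F'.neighborSet l := hadj
    rw [hset] at hmem
    exact Set.notMem_empty u hmem
  refine ⟨addEdge F' l j hne, addEdge_acyclic hne hiso hac', ?_, ?_⟩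
  · intro v
    by_cases h1 : v = l
    · subst h1; rw [addEdge_deg_left hne hiso, hdl]
    · by_cases h2 : v = j
      · subst h2
        rw [addEdge_deg_right hne hiso, hdeg' v, hv_j]
        omega
      · rw [addEdge_deg_other hne hiso v h1 h2, hdeg' v]
        exact hv_o v h1 h2
  · intro u hu v hv hadj
    rcases hadj with h | ⟨h1, h2⟩ | ⟨h1, h2⟩
    · exact hind' u hu v hv h
    · subst h1; subst h2; rcases hside with h | h <;> contradiction
    · subst h1; subst h2; rcases hside with h | h <;> contradiction


theorem stmt19 {n : ℕ} (d : Fin n → ℕ) (hd : Antitone d) (hpos : ∀ i, 1 ≤ d i)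
    (heven : Even (∑ i, d i)) (hsum : ∑ i, d i ≤ 2 * n - 2)
    (k : ℕ) (hk1 : 1 ≤ k) (hkn : k ≤ n) :
    (∃ F : SimpleGraph (Fin n), IsForestReal d F ∧
        DomSet F {i | (i : ℕ) < k} ∧ IndepSet F {i | k ≤ (i : ℕ)}) ↔
      ssum d k ≤ psum d k := by
  classical
  have hn1 : 1 ≤ n := le_trans hk1 hkn
  have hSsum : ssum d k = ∑ i ∈ univ.filter (fun i : Fin n => k ≤ (i : ℕ)), d i := by
    rw [ssum, Finset.sum_filter]
  have hPsum : psum d k = ∑ i ∈ univ.filter (fun i : Fin n => (i : ℕ) < k), d i := by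
    rw [psum, Finset.sum_filter]
  constructor
  · rintro ⟨F, ⟨hac, hdeg⟩, hdom, hind⟩
    rw [hSsum, hPsum]
    set Sf := univ.filter (fun i : Fin n => k ≤ (i : ℕ)) with hSf
    set Df := univ.filter (fun i : Fin n => (i : ℕ) < k) with hDf
    have hstep1 : ∑ i ∈ Sf, d i = ∑ i ∈ Sf, ∑ u ∈ Df, (if F.Adj i u then 1 else 0) := by
      refine Finset.sum_congr rfl (fun i hi => ?_)
      have hik : k ≤ (i : ℕ) := (mem_filter.mp hi).2
      rw [← hdeg i, deg_eq, Finset.card_filter]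
      refine (Finset.sum_subset (Finset.filter_subset _ _) ?_).symm
      intro u _ hu
      have huk : k ≤ (u : ℕ) :=
        not_lt.mp (fun h => hu (mem_filter.mpr ⟨mem_univ u, h⟩))
      have : ¬ F.Adj i u := hind i hik u huk
      simp [this]
    have hstep2 : ∑ i ∈ Sf, ∑ u ∈ Df, (if F.Adj i u then 1 else 0)
        = ∑ u ∈ Df, ∑ i ∈ Sf, (if F.Adj i u then 1 else 0) := Finset.sum_comm
    have hstep3 : ∀ u ∈ Df, ∑ i ∈ Sf, (if F.Adj i u then 1 else 0) ≤ d u := by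
      intro u _
      rw [← hdeg u, deg_eq, Finset.card_filter]
      calc ∑ i ∈ Sf, (if F.Adj i u then 1 else 0)
          = ∑ i ∈ Sf, (if F.Adj u i then 1 else 0) := by
            refine Finset.sum_congr rfl (fun i _ => ?_)
            rw [F.adj_comm]
        _ ≤ ∑ i ∈ univ, (if F.Adj u i then 1 else 0) :=
            Finset.sum_le_sum_of_subset (Finset.filter_subset _ _)
    calc ∑ i ∈ Sf, d i = ∑ u ∈ Df, ∑ i ∈ Sf, (if F.Adj i u then 1 else 0) := by
          rw [hstep1, hstep2]
      _ ≤ ∑ u ∈ Df, d u := Finset.sum_le_sum hstep3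
  · intro hle
    set T := univ.filter (fun i : Fin n => k ≤ (i : ℕ)) with hT
    have hTc : Tᶜ = univ.filter (fun i : Fin n => (i : ℕ) < k) := by
      ext v
      simp [hT, Finset.mem_compl, not_le]
    have h2 : ∑ i, d i + 2 ≤ 2 * (univ.filter fun v => 1 ≤ d v).card := by
      have : (univ.filter fun v : Fin n => 1 ≤ d v) = univ :=
        Finset.filter_true_of_mem (fun i _ => hpos i)
      rw [this, Finset.card_univ, Fintype.card_fin]
      omega
    have hcmp : ∑ i ∈ T, d i ≤ ∑ i ∈ Tᶜ, d i := by
      rw [hTc, ← hSsum, ← hPsum]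
      exact hle
    obtain ⟨F, hac, hdeg, hind⟩ := key (∑ i, d i) d T rfl heven (Or.inl h2) hcmp
    refine ⟨F, ⟨hac, hdeg⟩, ?_, ?_⟩
    · intro v hv
      have hvk : k ≤ (v : ℕ) := not_lt.mp hv
      have hdv : 0 < deg F v := by rw [hdeg v]; exact hpos v
      rw [deg] at hdv
      obtain ⟨⟨u, hu⟩, -⟩ := Nat.card_pos_iff.mp hdv
      refine ⟨u, ?_, hu.symm⟩
      show (u : ℕ) < k
      by_contra huk
      exact hind v (mem_filter.mpr ⟨mem_univ v, hvk⟩) u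
        (mem_filter.mpr ⟨mem_univ u, not_lt.mp huk⟩) hu
    · intro u hu v hv
      exact hind u (mem_filter.mpr ⟨mem_univ u, hu⟩) v (mem_filter.mpr ⟨mem_univ v, hv⟩)
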